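/- Theorem 1, part 2 (equation (8)): Let g admit a sum decomposition 𝒢 = {g_1, …, g_m} on a finite ground set Ω partitioned into nonempty pairwise-disjoint blocks U_1, …, U_n, let X^d = {x^d_1, …, x^d_n} be an assignment with x^d_i ∈ U_i, and for each i let N_i ⊆ {1, …, i−1} with N̂_i := {1, …, i−1} \ N_i. Then Σ_{i=1}^{n} γ^dist_i ≤ Σ_{i=1}^{n} Σ_{j ∈ N̂_i} Ŵ(i,j), where γ^dist_i := g(x^d_i | X^d_{N_i}) − g(x^d_i | X^d_{1:i−1}) and Ŵ(i,j) := Σ_{k=1}^{m} min(max_{x ∈ U_i} g_k({x}), max_{x ∈ U_j} g_k({x})). -/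

import Mathlib

open Finset

/-- Marginal gain `g(C|A) = g(A ∪ C) − g(A)`. -/
def marg {Ω : Type*} [DecidableEq Ω] (g : Finset Ω → ℝ) (C A : Finset Ω) : ℝ :=
  g (A ∪ C) - g A

section Aux

variable {Ω : Type*} [DecidableEq Ω]

lemma step_bound (f : Finset Ω → ℝ) (hnorm : f ∅ = 0)
    (hmono : ∀ ⦃A B : Finset Ω⦄, B ⊆ A → f B ≤ f A)
    (hsub : ∀ ⦃A B C : Finset Ω⦄, B ⊆ A → Disjoint A C →
      f (A ∪ C) - f A ≤ f (B ∪ C) - f B)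
    (x b : Ω) (S : Finset Ω) (hx : x ∉ S) :
    marg f {x} S - marg f {x} (S ∪ {b}) ≤ min (f {x}) (f {b}) := by
  have hfx : (0:ℝ) ≤ f {x} := by
    have := hmono (Finset.empty_subset {x}); linarith [this, hnorm]
  have hfb : (0:ℝ) ≤ f {b} := by
    have := hmono (Finset.empty_subset {b}); linarith [this, hnorm]
  by_cases hb : b ∈ S
  · have : S ∪ {b} = S := by
      apply Finset.union_eq_left.mpr; simpa using hb
    rw [this]
    simp [le_min hfx hfb]
  · have hdx : Disjoint S ({x} : Finset Ω) := by simpa using hx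
    have hdb : Disjoint S ({b} : Finset Ω) := by simpa using hb
    have h1 : f (S ∪ {x}) - f S ≤ f {x} := by
      have := hsub (Finset.empty_subset S) hdx
      simpa [hnorm] using this
    have h2 : f (S ∪ {b}) - f S ≤ f {b} := by
      have := hsub (Finset.empty_subset S) hdb
      simpa [hnorm] using this
    have h3 : f (S ∪ {b}) ≤ f (S ∪ {b} ∪ {x}) := hmono (Finset.subset_union_left)
    have h4 : f (S ∪ {x}) ≤ f (S ∪ {b} ∪ {x}) :=
      hmono (Finset.union_subset_union_left Finset.subset_union_left)
    simp only [marg]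
    apply le_min <;> linarith

lemma key_bound (f : Finset Ω → ℝ) (hnorm : f ∅ = 0)
    (hmono : ∀ ⦃A B : Finset Ω⦄, B ⊆ A → f B ≤ f A)
    (hsub : ∀ ⦃A B C : Finset Ω⦄, B ⊆ A → Disjoint A C →
      f (A ∪ C) - f A ≤ f (B ∪ C) - f B)
    (x : Ω) (A : Finset Ω) (hxA : x ∉ A) :
    ∀ B : Finset Ω, x ∉ B →
      marg f {x} A - marg f {x} (A ∪ B) ≤ ∑ b ∈ B, min (f {x}) (f {b}) := by
  intro B
  induction B using Finset.induction_on with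
  | empty => intro _; simp
  | @insert b B' hb ih =>
    intro hxB
    have hx1 : x ∉ A ∪ B' := by
      simp only [Finset.mem_union]
      push_neg
      exact ⟨hxA, fun h => hxB (Finset.mem_insert_of_mem h)⟩
    have hxB' : x ∉ B' := fun h => hxB (Finset.mem_insert_of_mem h)
    have e1 : A ∪ insert b B' = (A ∪ B') ∪ {b} := by
      ext y; simp [Finset.mem_insert]
    rw [e1, Finset.sum_insert hb]
    have := step_bound f hnorm hmono hsub x b (A ∪ B') hx1
    have := ih hxB'
    linarith

end Aux

/-- Theorem 1, part 2 (equation (8)). -/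
theorem total_distributed_cost_bound
    {Ω : Type*} [Fintype Ω] [DecidableEq Ω]
    (g : Finset Ω → ℝ)
    (m : ℕ) (gs : Fin m → Finset Ω → ℝ)
    (hnorm : ∀ k, gs k ∅ = 0)
    (hmono : ∀ k, ∀ ⦃A B : Finset Ω⦄, B ⊆ A → gs k B ≤ gs k A)
    (hsub : ∀ k, ∀ ⦃A B C : Finset Ω⦄, B ⊆ A → Disjoint A C →
      gs k (A ∪ C) - gs k A ≤ gs k (B ∪ C) - gs k B)
    (hdecomp : ∀ X : Finset Ω, g X = ∑ k : Fin m, gs k X)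
    (n : ℕ) (U : Fin n → Finset Ω)
    (hUne : ∀ i, (U i).Nonempty)
    (hUdisj : ∀ i j, i ≠ j → Disjoint (U i) (U j))
    (hUcover : ∀ x : Ω, ∃ i, x ∈ U i)
    (xd : Fin n → Ω) (hxd : ∀ i, xd i ∈ U i)
    (Ni : Fin n → Finset (Fin n)) (hNi : ∀ i, ∀ j ∈ Ni i, j < i) :
    ∑ i : Fin n,
        (marg g {xd i} (Finset.image xd (Ni i))
          - marg g {xd i} (Finset.image xd (Finset.univ.filter (· < i))))
      ≤ ∑ i : Fin n, ∑ j ∈ (Finset.univ.filter (· < i)) \ Ni i,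
          ∑ k : Fin m,
            min ((U i).sup' (hUne i) (fun x => gs k {x}))
                ((U j).sup' (hUne j) (fun x => gs k {x})) := by
  have hinj : Function.Injective xd := by
    intro i j h
    by_contra hne
    exact Finset.disjoint_left.mp (hUdisj i j hne) (hxd i) (h ▸ hxd j)
  have hmarg : ∀ C A : Finset Ω, marg g C A = ∑ k : Fin m, marg (gs k) C A := by
    intro C A
    simp [marg, hdecomp, Finset.sum_sub_distrib]
  -- swap RHS inner sums
  rw [show (∑ i : Fin n, ∑ j ∈ (Finset.univ.filter (· < i)) \ Ni i,
          ∑ k : Fin m,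
            min ((U i).sup' (hUne i) (fun x => gs k {x}))
                ((U j).sup' (hUne j) (fun x => gs k {x})))
      = ∑ i : Fin n, ∑ k : Fin m, ∑ j ∈ (Finset.univ.filter (· < i)) \ Ni i,
            min ((U i).sup' (hUne i) (fun x => gs k {x}))
                ((U j).sup' (hUne j) (fun x => gs k {x})) from by
        exact Finset.sum_congr rfl fun i _ => Finset.sum_comm]
  apply Finset.sum_le_sum
  intro i _
  rw [hmarg, hmarg, ← Finset.sum_sub_distrib]
  apply Finset.sum_le_sum
  intro k _
  set S : Finset (Fin n) := Finset.univ.filter (· < i) with hS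
  have hNiS : Ni i ⊆ S := by
    intro j hj
    simp [hS, hNi i j hj]
  have hunion : Finset.image xd S = Finset.image xd (Ni i) ∪ Finset.image xd (S \ Ni i) := by
    rw [← Finset.image_union, Finset.union_sdiff_of_subset hNiS]
  have hxiS : ∀ T ⊆ S, xd i ∉ Finset.image xd T := by
    intro T hT h
    obtain ⟨j, hj, hje⟩ := Finset.mem_image.mp h
    have : j < i := by have := hT hj; simpa [hS] using this
    exact absurd (hinj hje) (ne_of_lt this)
  rw [hunion]
  calc marg (gs k) {xd i} (Finset.image xd (Ni i))
        - marg (gs k) {xd i} (Finset.image xd (Ni i) ∪ Finset.image xd (S \ Ni i))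
      ≤ ∑ b ∈ Finset.image xd (S \ Ni i), min (gs k {xd i}) (gs k {b}) := by
        apply key_bound (gs k) (hnorm k) (hmono k) (hsub k) (xd i) _
          (hxiS _ hNiS) _ (hxiS _ (Finset.sdiff_subset))
    _ = ∑ j ∈ S \ Ni i, min (gs k {xd i}) (gs k {xd j}) := by
        rw [Finset.sum_image (fun a _ b _ h => hinj h)]
    _ ≤ ∑ j ∈ S \ Ni i,
            min ((U i).sup' (hUne i) (fun x => gs k {x}))
                ((U j).sup' (hUne j) (fun x => gs k {x})) := by
        apply Finset.sum_le_sum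
        intro j _
        exact min_le_min (Finset.le_sup' (fun x => gs k {x}) (hxd i)) (Finset.le_sup' (fun x => gs k {x}) (hxd j))
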